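/- For any Hermitian matrix H on an n-qubit system A (dimension d_A = 2^n) and any single-qubit pure state |r⟩ on an ancillary qubit system R, the trace norm ‖H‖₁ equals max over unitaries U⁺ on AR of Tr[(I_A ⊗ |0⟩⟨0|_R) U⁺ (H ⊗ |r⟩⟨r|) U⁺†] plus max over unitaries U⁻ on AR of Tr[(I_A ⊗ |0⟩⟨0|_R) U⁻ (−H ⊗ |r⟩⟨r|) U⁻†]. -/

import Mathlib

open Matrix Kronecker

/-- Trace norm of a Hermitian matrix: sum of absolute values of eigenvalues. -/
noncomputable def traceNorm {n : Type*} [Fintype n] [DecidableEq n] (H : Matrix n n ℂ) : ℝ :=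
  if h : H.IsHermitian then ∑ i, |h.eigenvalues i| else 0

private lemma star_kron {m p : Type*} [Fintype m] [Fintype p]
    (A : Matrix m m ℂ) (B : Matrix p p ℂ) : star (A ⊗ₖ B) = star A ⊗ₖ star B := by
  ext ⟨i, s⟩ ⟨j, t⟩
  simp [Matrix.star_apply, _root_.map_mul]

private lemma kron_unitary {m p : Type*} [Fintype m] [Fintype p] [DecidableEq m] [DecidableEq p]
    {A : Matrix m m ℂ} {B : Matrix p p ℂ}
    (hA : A ∈ Matrix.unitaryGroup m ℂ) (hB : B ∈ Matrix.unitaryGroup p ℂ) :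
    A ⊗ₖ B ∈ Matrix.unitaryGroup (m × p) ℂ := by
  rw [Matrix.mem_unitaryGroup_iff']
  rw [star_kron, ← Matrix.mul_kronecker_mul, Matrix.mem_unitaryGroup_iff'.mp hA,
    Matrix.mem_unitaryGroup_iff'.mp hB, Matrix.one_kronecker_one]

private lemma trace_formula (d : ℕ) (T : Matrix (Fin d × Fin 2) (Fin d × Fin 2) ℂ)
    (μ : Fin d × Fin 2 → ℝ) :
    (((1 : Matrix (Fin d) (Fin d) ℂ) ⊗ₖ Matrix.single (0 : Fin 2) (0 : Fin 2) (1 : ℂ)) *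
      (T * Matrix.diagonal (fun c => (μ c : ℂ)) * star T)).trace
    = ((∑ j : Fin d, ∑ c, Complex.normSq (T (j, 0) c) * μ c : ℝ) : ℂ) := by
  have hX : ∀ a : Fin d × Fin 2, (T * Matrix.diagonal (fun c => (μ c : ℂ)) * star T) a a
      = ((∑ c, Complex.normSq (T a c) * μ c : ℝ) : ℂ) := by
    intro a
    rw [Matrix.mul_apply]
    push_cast
    congr 1; funext c
    rw [Matrix.mul_diagonal]
    simp only [Matrix.star_apply, Matrix.conjTranspose_apply]
    rw [show (star (T a c)) = (starRingEnd ℂ) (T a c) from rfl, ← Complex.mul_conj]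
    ring
  have key : ∀ X : Matrix (Fin d × Fin 2) (Fin d × Fin 2) ℂ,
      (((1 : Matrix (Fin d) (Fin d) ℂ) ⊗ₖ Matrix.single (0 : Fin 2) (0 : Fin 2) (1 : ℂ)) *
        X).trace = ∑ j : Fin d, X (j, 0) (j, 0) := by
    intro X
    rw [Matrix.trace]
    simp only [Matrix.diag_apply, Matrix.mul_apply, Matrix.kroneckerMap_apply, Matrix.one_apply,
      Matrix.single, Matrix.of_apply, ite_and, Fintype.sum_prod_type]
    simp [Fin.sum_univ_two, ite_mul, zero_mul, one_mul, Finset.sum_ite_eq, Finset.sum_ite_eq']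
  rw [key]
  push_cast
  exact Finset.sum_congr rfl fun j _ => by rw [hX]; push_cast; rfl

private lemma colsum {d : ℕ} {T : Matrix (Fin d × Fin 2) (Fin d × Fin 2) ℂ}
    (hT : T ∈ Matrix.unitaryGroup (Fin d × Fin 2) ℂ) (c : Fin d × Fin 2) :
    ∑ a, Complex.normSq (T a c) = 1 := by
  have h2 := congrFun (congrFun (Matrix.mem_unitaryGroup_iff'.mp hT) c) c
  rw [Matrix.mul_apply, Matrix.one_apply_eq] at h2
  have h3 : ∀ a, (star T) c a * T a c = ((Complex.normSq (T a c) : ℝ) : ℂ) := by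
    intro a
    simp only [Matrix.star_apply, Matrix.conjTranspose_apply]
    rw [mul_comm, show star (T a c) = (starRingEnd ℂ) (T a c) from rfl, Complex.mul_conj]
  rw [Finset.sum_congr rfl (fun a _ => h3 a)] at h2
  exact_mod_cast h2

private lemma key_lemma (d : ℕ) (V : Matrix (Fin d) (Fin d) ℂ)
    (hV : V ∈ Matrix.unitaryGroup (Fin d) ℂ) (lam : Fin d → ℝ)
    (r : Fin 2 → ℂ) (hr : star r ⬝ᵥ r = 1) :
    IsGreatest {x : ℝ | ∃ U ∈ Matrix.unitaryGroup (Fin d × Fin 2) ℂ,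
        (((1 : Matrix (Fin d) (Fin d) ℂ) ⊗ₖ
            Matrix.single (0 : Fin 2) (0 : Fin 2) (1 : ℂ)) *
          (U * ((V * Matrix.diagonal (fun i => (lam i : ℂ)) * star V) ⊗ₖ
              Matrix.vecMulVec r (star r)) * star U)).trace = (x : ℂ)}
      (∑ i, max (lam i) 0) := by
  -- the single-qubit unitary sending |0⟩ to |r⟩
  have h1 : (starRingEnd ℂ) (r 0) * r 0 + (starRingEnd ℂ) (r 1) * r 1 = 1 := by
    simpa [dotProduct, Fin.sum_univ_two] using hr
  set W : Matrix (Fin 2) (Fin 2) ℂ :=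
    !![r 0, -(starRingEnd ℂ) (r 1); r 1, (starRingEnd ℂ) (r 0)] with hWdef
  have hW : W ∈ Matrix.unitaryGroup (Fin 2) ℂ := by
    rw [Matrix.mem_unitaryGroup_iff']
    ext i j
    fin_cases i <;> fin_cases j <;>
      simp [Matrix.mul_apply, Fin.sum_univ_two, Matrix.one_apply, Matrix.conjTranspose_apply,
        hWdef] <;> first | linear_combination h1 | ring
  have hrho : Matrix.vecMulVec r (star r) = W * Matrix.single 0 0 1 * star W := by
    ext i j
    fin_cases i <;> fin_cases j <;>
      simp [Matrix.mul_apply, Fin.sum_univ_two, Matrix.vecMulVec_apply, Matrix.single,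
        Matrix.conjTranspose_apply, hWdef, Matrix.vecHead, Matrix.vecTail, Function.comp,
        mul_comm]
  set μ : Fin d × Fin 2 → ℝ := fun c => if c.2 = 0 then lam c.1 else 0 with hμdef
  have hstd : Matrix.single (0 : Fin 2) (0 : Fin 2) (1 : ℂ)
      = Matrix.diagonal (fun s => if s = 0 then 1 else 0) := by
    ext i j
    fin_cases i <;> fin_cases j <;> simp [Matrix.single, Matrix.diagonal]
  have hdiag : (Matrix.diagonal (fun i => (lam i : ℂ))) ⊗ₖ
      Matrix.single (0 : Fin 2) (0 : Fin 2) (1 : ℂ)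
      = Matrix.diagonal (fun c => (μ c : ℂ)) := by
    rw [hstd, Matrix.diagonal_kronecker_diagonal]
    exact congrArg Matrix.diagonal (funext fun c => by by_cases h : c.2 = 0 <;> simp [hμdef, h])
  have hVW : (V ⊗ₖ W) ∈ Matrix.unitaryGroup (Fin d × Fin 2) ℂ := kron_unitary hV hW
  have hdecomp : (V * Matrix.diagonal (fun i => (lam i : ℂ)) * star V) ⊗ₖ
      Matrix.vecMulVec r (star r)
      = (V ⊗ₖ W) * Matrix.diagonal (fun c => (μ c : ℂ)) * star (V ⊗ₖ W) := by
    rw [hrho, Matrix.mul_kronecker_mul, Matrix.mul_kronecker_mul, hdiag, ← star_kron]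
  have hconj : ∀ U : Matrix (Fin d × Fin 2) (Fin d × Fin 2) ℂ,
      U * ((V * Matrix.diagonal (fun i => (lam i : ℂ)) * star V) ⊗ₖ
          Matrix.vecMulVec r (star r)) * star U
      = (U * (V ⊗ₖ W)) * Matrix.diagonal (fun c => (μ c : ℂ)) * star (U * (V ⊗ₖ W)) := by
    intro U
    rw [hdecomp, Matrix.star_mul]
    simp only [Matrix.mul_assoc]
  have hsum_max : ∑ c : Fin d × Fin 2, max (μ c) 0 = ∑ i, max (lam i) 0 := by
    rw [Fintype.sum_prod_type]
    exact Finset.sum_congr rfl fun i _ => by simp [Fin.sum_univ_two, hμdef]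
  constructor
  · -- achievability
    -- the "sign flip" permutation
    set f : Fin d × Fin 2 → Fin d × Fin 2 :=
      fun c => (c.1, if lam c.1 < 0 then c.2 + 1 else c.2) with hfdef
    have hFin2 : ∀ s : Fin 2, s + 1 + 1 = s := by decide
    have hff : ∀ c, f (f c) = c := by
      rintro ⟨i, s⟩
      by_cases h : lam i < 0 <;> simp [hfdef, h, hFin2]
    have hfinj : Function.Injective f := fun a b h => by rw [← hff a, h, hff]
    set S : Matrix (Fin d × Fin 2) (Fin d × Fin 2) ℂ :=
      Matrix.of (fun a b => if a = f b then (1 : ℂ) else 0) with hSdef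
    have hS : S ∈ Matrix.unitaryGroup (Fin d × Fin 2) ℂ := by
      rw [Matrix.mem_unitaryGroup_iff']
      ext b b'
      rw [Matrix.mul_apply]
      have hterm : ∀ a, (star S) b a * S a b'
          = if f b = a then (if f b' = a then (1 : ℂ) else 0) else 0 := by
        intro a
        simp only [Matrix.star_apply, hSdef, Matrix.of_apply]
        by_cases h : a = f b <;> by_cases h' : a = f b' <;> simp [h, h', eq_comm]
      rw [Finset.sum_congr rfl fun a _ => hterm a, Finset.sum_ite_eq]
      simp [Matrix.one_apply, hfinj.eq_iff, eq_comm]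
    refine ⟨S * star (V ⊗ₖ W), Submonoid.mul_mem _ hS (Unitary.star_mem hVW), ?_⟩
    rw [hconj, Matrix.mul_assoc S, Matrix.mem_unitaryGroup_iff'.mp hVW, Matrix.mul_one,
      trace_formula]
    congr 1
    have hterm : ∀ j : Fin d, ∑ c, Complex.normSq (S (j, 0) c) * μ c = max (lam j) 0 := by
      intro j
      have h4 : ∀ c, Complex.normSq (S (j, 0) c) * μ c
          = if f (j, 0) = c then μ c else 0 := by
        intro c
        rw [hSdef]
        simp only [Matrix.of_apply, apply_ite Complex.normSq, Complex.normSq_one,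
          Complex.normSq_zero, ite_mul, one_mul, zero_mul]
        congr 1
        apply propext
        constructor
        · intro h; rw [h, hff]
        · intro h; rw [← h, hff]
      rw [Finset.sum_congr rfl (fun c _ => h4 c), Finset.sum_ite_eq]
      simp only [Finset.mem_univ, if_true]
      by_cases h : lam j < 0
      · simp only [hfdef, hμdef, h, if_true]
        norm_num
        exact h.le
      · simp only [hfdef, hμdef, h, if_false]
        norm_num
        exact not_lt.mp h
    rw [Finset.sum_congr rfl (fun j _ => hterm j)]
  · -- upper bound
    rintro x ⟨U, hU, hUx⟩
    set T : Matrix (Fin d × Fin 2) (Fin d × Fin 2) ℂ := U * (V ⊗ₖ W) with hTdef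
    have hT : T ∈ Matrix.unitaryGroup (Fin d × Fin 2) ℂ := Submonoid.mul_mem _ hU hVW
    rw [hconj, trace_formula] at hUx
    have hx : x = ∑ j : Fin d, ∑ c, Complex.normSq (T (j, 0) c) * μ c := by
      exact_mod_cast hUx.symm
    rw [hx, Finset.sum_comm]
    calc ∑ c : Fin d × Fin 2, ∑ j : Fin d, Complex.normSq (T (j, 0) c) * μ c
        = ∑ c : Fin d × Fin 2, (∑ j : Fin d, Complex.normSq (T (j, 0) c)) * μ c := by
          exact Finset.sum_congr rfl fun c _ => (Finset.sum_mul _ _ _).symm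
      _ ≤ ∑ c : Fin d × Fin 2, max (μ c) 0 := by
          apply Finset.sum_le_sum
          intro c _
          have hw0 : 0 ≤ ∑ j : Fin d, Complex.normSq (T (j, 0) c) :=
            Finset.sum_nonneg fun j _ => Complex.normSq_nonneg _
          have hw1 : ∑ j : Fin d, Complex.normSq (T (j, 0) c) ≤ 1 := by
            rw [← colsum hT c, Fintype.sum_prod_type]
            apply Finset.sum_le_sum
            intro j _
            rw [Fin.sum_univ_two]
            exact le_add_of_nonneg_right (Complex.normSq_nonneg _)
          rcases le_or_gt 0 (μ c) with h | h
          · calc (∑ j : Fin d, Complex.normSq (T (j, 0) c)) * μ c ≤ 1 * μ c :=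
                  mul_le_mul_of_nonneg_right hw1 h
              _ = μ c := one_mul _
              _ ≤ max (μ c) 0 := le_max_left _ _
          · calc (∑ j : Fin d, Complex.normSq (T (j, 0) c)) * μ c ≤ 0 :=
                  mul_nonpos_of_nonneg_of_nonpos hw0 h.le
              _ ≤ max (μ c) 0 := le_max_right _ _
      _ = ∑ i, max (lam i) 0 := hsum_max

/-- `‖H‖₁` equals the sum of the two maxima of
`Tr[(I_A ⊗ |0⟩⟨0|_R) U^± (±H ⊗ |r⟩⟨r|) U^±†]` over unitaries on `AR`. -/
theorem traceNorm_eq_max_add_max (n : ℕ)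
    (H : Matrix (Fin (2 ^ n)) (Fin (2 ^ n)) ℂ) (hH : H.IsHermitian)
    (r : Fin 2 → ℂ) (hr : star r ⬝ᵥ r = 1) :
    ∃ xp xm : ℝ,
      IsGreatest {x : ℝ | ∃ U ∈ Matrix.unitaryGroup (Fin (2 ^ n) × Fin 2) ℂ,
          (((1 : Matrix (Fin (2 ^ n)) (Fin (2 ^ n)) ℂ) ⊗ₖ
              Matrix.single (0 : Fin 2) (0 : Fin 2) (1 : ℂ)) *
            (U * (H ⊗ₖ Matrix.vecMulVec r (star r)) * star U)).trace = (x : ℂ)} xp ∧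
      IsGreatest {x : ℝ | ∃ U ∈ Matrix.unitaryGroup (Fin (2 ^ n) × Fin 2) ℂ,
          (((1 : Matrix (Fin (2 ^ n)) (Fin (2 ^ n)) ℂ) ⊗ₖ
              Matrix.single (0 : Fin 2) (0 : Fin 2) (1 : ℂ)) *
            (U * ((-H) ⊗ₖ Matrix.vecMulVec r (star r)) * star U)).trace = (x : ℂ)} xm ∧
      traceNorm H = xp + xm := by
  set V : Matrix (Fin (2 ^ n)) (Fin (2 ^ n)) ℂ := (hH.eigenvectorUnitary : Matrix (Fin (2 ^ n)) (Fin (2 ^ n)) ℂ) with hVdef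
  have hV : V ∈ Matrix.unitaryGroup (Fin (2 ^ n)) ℂ := hH.eigenvectorUnitary.2
  set lam : Fin (2 ^ n) → ℝ := hH.eigenvalues with hlamdef
  have hspec : H = V * Matrix.diagonal (fun i => (lam i : ℂ)) * star V := hH.spectral_theorem
  have hspecneg : -H = V * Matrix.diagonal (fun i => ((-lam i : ℝ) : ℂ)) * star V := by
    rw [hspec]
    rw [show Matrix.diagonal (fun i => ((-lam i : ℝ) : ℂ))
        = -Matrix.diagonal (fun i => (lam i : ℂ)) by
      ext i j; by_cases h : i = j <;> simp [Matrix.diagonal_apply, h]]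
    rw [Matrix.mul_neg, Matrix.neg_mul]
  have hp := key_lemma (2 ^ n) V hV lam r hr
  have hm := key_lemma (2 ^ n) V hV (fun i => -lam i) r hr
  rw [← hspec] at hp
  rw [← hspecneg] at hm
  refine ⟨∑ i, max (lam i) 0, ∑ i, max (-lam i) 0, hp, hm, ?_⟩
  rw [traceNorm, dif_pos hH, ← Finset.sum_add_distrib]
  refine Finset.sum_congr rfl fun i _ => ?_
  rcases le_total 0 (lam i) with h | h
  · rw [abs_of_nonneg h, max_eq_left h, max_eq_right (neg_nonpos.mpr h), add_zero]
  · rw [abs_of_nonpos h, max_eq_right h, max_eq_left (neg_nonneg.mpr h), zero_add]
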